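/- Let N ≥ 1, let λ₀ > 0, and let V₀ : ℝ^N → ℝ^N be continuously differentiable. Suppose that for every x, ξ ∈ ℝ^N and every index i ∈ {1,…,N} one has Σ_{j=1}^N ∂_i V₀^j(x) · ξ^i · ξ^j ≤ −λ₀ · (ξ^i)². Then: (a) ∂_i V₀^i(x) ≤ −λ₀ for every x ∈ ℝ^N and every i; (b) ∂_i V₀^k(x) = 0 for every x ∈ ℝ^N and all indices k ≠ i; (c) for each i, the component function V₀^i is unbounded on ℝ^N (indeed V₀^i(x + t·e_i) ≤ V₀^i(x) − λ₀·t for t > 0, so V₀^i is unbounded below and above along the i-th coordinate direction). -/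

import Mathlib

/-- Lemma B.1: if the Obtuse Angle Condition
`∑ⱼ ∂ᵢV₀ʲ(x)·ξⁱ·ξʲ ≤ −λ₀·(ξⁱ)²` holds for all `x, ξ` and all `i`, then the
diagonal partials satisfy `∂ᵢV₀ⁱ ≤ −λ₀`, the off-diagonal partials vanish, and
each component `V₀ⁱ` decays by at least `λ₀·t` along the `i`-th coordinate
direction, hence is unbounded below and above. -/
theorem stmt_2 (N : ℕ) (hN : 1 ≤ N) (lam0 : ℝ) (hlam0 : 0 < lam0)
    (V₀ : (Fin N → ℝ) → (Fin N → ℝ)) (hV₀ : ContDiff ℝ 1 V₀)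
    (hOAC : ∀ (x ξ : Fin N → ℝ) (i : Fin N),
      ∑ j : Fin N, fderiv ℝ V₀ x (Pi.single i 1) j * ξ i * ξ j ≤
        -lam0 * (ξ i) ^ 2) :
    (∀ (x : Fin N → ℝ) (i : Fin N),
        fderiv ℝ V₀ x (Pi.single i 1) i ≤ -lam0) ∧
    (∀ (x : Fin N → ℝ) (i k : Fin N), k ≠ i →
        fderiv ℝ V₀ x (Pi.single i 1) k = 0) ∧
    (∀ (x : Fin N → ℝ) (i : Fin N) (t : ℝ), 0 < t →
        V₀ (x + t • (Pi.single i 1 : Fin N → ℝ)) i ≤ V₀ x i - lam0 * t) ∧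
    (∀ i : Fin N,
        ¬ BddBelow (Set.range fun x : Fin N → ℝ => V₀ x i) ∧
        ¬ BddAbove (Set.range fun x : Fin N → ℝ => V₀ x i)) := by
  -- (a)
  have ha : ∀ (x : Fin N → ℝ) (i : Fin N),
      fderiv ℝ V₀ x (Pi.single i 1) i ≤ -lam0 := by
    intro x i
    have h := hOAC x (Pi.single i 1) i
    simp [Pi.single_apply, mul_ite, Finset.sum_ite_eq'] at h
    linarith
  -- (b)
  have hb : ∀ (x : Fin N → ℝ) (i k : Fin N), k ≠ i →
      fderiv ℝ V₀ x (Pi.single i 1) k = 0 := by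
    intro x i k hki
    by_contra hne
    set D := fun j => fderiv ℝ V₀ x (Pi.single i 1) j with hD
    set s : ℝ := (-lam0 + 1 - D i) / D k with hs
    set ξ : Fin N → ℝ := fun j =>
      (Pi.single i 1 : Fin N → ℝ) j + s * (Pi.single k 1 : Fin N → ℝ) j with hξ
    have h := hOAC x ξ i
    have hξi : ξ i = 1 := by
      simp [hξ, Pi.single_apply, Ne.symm hki]
    rw [hξi] at h
    have hsum : (∑ j : Fin N, fderiv ℝ V₀ x (Pi.single i 1) j * 1 * ξ j)
        = D i + s * D k := by
      have hterm : ∀ j : Fin N, fderiv ℝ V₀ x (Pi.single i 1) j * 1 * ξ j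
          = (if j = i then D j else 0) + (if j = k then s * D j else 0) := by
        intro j
        have hxj : ξ j = (if j = i then (1:ℝ) else 0)
            + s * (if j = k then 1 else 0) := by
          simp only [hξ, Pi.single_apply]
        rw [hxj]
        by_cases hj : j = i <;> by_cases hj' : j = k
        · exact absurd (hj'.symm.trans hj) hki
        · simp [hj, hj', Ne.symm hki] <;> try ring
        · simp [hj, hj', hki] <;> try ring
        · simp [hj, hj']
      rw [Finset.sum_congr rfl (fun j _ => hterm j), Finset.sum_add_distrib]
      simp [Finset.sum_ite_eq']
    rw [hsum] at h
    have hsd : s * D k = -lam0 + 1 - D i := div_mul_cancel₀ _ hne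
    rw [hsd] at h
    simp at h
    linarith
  -- derivative of t ↦ V₀ (x + t • e) i
  have hderiv : ∀ (x : Fin N → ℝ) (i : Fin N) (t : ℝ),
      HasDerivAt (fun t : ℝ => V₀ (x + t • (Pi.single i 1 : Fin N → ℝ)) i)
        (fderiv ℝ V₀ (x + t • (Pi.single i 1 : Fin N → ℝ)) (Pi.single i 1) i) t := by
    intro x i t
    set e : Fin N → ℝ := Pi.single i 1 with he
    have hline : HasDerivAt (fun t : ℝ => x + t • e) e t := by
      have := ((hasDerivAt_id t).smul_const e).const_add x
      simpa using this
    have hdV : HasFDerivAt V₀ (fderiv ℝ V₀ (x + t • e)) (x + t • e) :=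
      (hV₀.differentiable one_ne_zero (x + t • e)).hasFDerivAt
    have hcomp := hdV.comp_hasDerivAt t hline
    have := ((ContinuousLinearMap.proj i :
        (Fin N → ℝ) →L[ℝ] ℝ).hasFDerivAt).comp_hasDerivAt t hcomp
    exact this
  -- (c)
  have hc : ∀ (x : Fin N → ℝ) (i : Fin N) (t : ℝ), 0 < t →
      V₀ (x + t • (Pi.single i 1 : Fin N → ℝ)) i ≤ V₀ x i - lam0 * t := by
    intro x i t ht
    set e : Fin N → ℝ := Pi.single i 1 with he
    set φ : ℝ → ℝ := fun t => V₀ (x + t • e) i + lam0 * t with hφ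
    have hφd : ∀ s : ℝ, HasDerivAt φ
        (fderiv ℝ V₀ (x + s • e) (Pi.single i 1) i + lam0) s := by
      intro s
      have h1 : HasDerivAt (fun u : ℝ => lam0 * u) lam0 s := by
        simpa using (hasDerivAt_id s).const_mul lam0
      exact (hderiv x i s).add h1
    have hanti : Antitone φ := by
      apply antitone_of_deriv_nonpos
      · exact fun s => (hφd s).differentiableAt
      · intro s
        rw [(hφd s).deriv]
        have := ha (x + s • e) i
        linarith
    have := hanti (le_of_lt ht)
    simp only [hφ] at this
    have hx0 : x + (0 : ℝ) • e = x := by simp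
    rw [hx0] at this
    linarith
  refine ⟨ha, hb, hc, ?_⟩
  intro i
  constructor
  · rintro ⟨c, hcl⟩
    have hc0 : c ≤ V₀ 0 i := hcl ⟨0, rfl⟩
    have h1 : (0:ℝ) ≤ (V₀ 0 i - c) / lam0 := div_nonneg (by linarith) hlam0.le
    have htpos : 0 < (V₀ 0 i - c) / lam0 + 1 := by linarith
    have h := hc 0 i ((V₀ 0 i - c) / lam0 + 1) htpos
    have hval : c ≤ V₀ (0 + ((V₀ 0 i - c) / lam0 + 1) •
        (Pi.single i 1 : Fin N → ℝ)) i := hcl ⟨_, rfl⟩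
    have hlt : lam0 * ((V₀ 0 i - c) / lam0 + 1) = (V₀ 0 i - c) + lam0 := by
      field_simp
    rw [hlt] at h
    linarith
  · rintro ⟨c, hcu⟩
    have hc0 : V₀ 0 i ≤ c := hcu ⟨0, rfl⟩
    have h1 : (0:ℝ) ≤ (c - V₀ 0 i) / lam0 := div_nonneg (by linarith) hlam0.le
    have htpos : 0 < (c - V₀ 0 i) / lam0 + 1 := by linarith
    have h := hc (-(((c - V₀ 0 i) / lam0 + 1) • (Pi.single i 1 : Fin N → ℝ)))
      i ((c - V₀ 0 i) / lam0 + 1) htpos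
    rw [neg_add_cancel] at h
    have hval : V₀ (-(((c - V₀ 0 i) / lam0 + 1) •
        (Pi.single i 1 : Fin N → ℝ))) i ≤ c := hcu ⟨_, rfl⟩
    have hlt : lam0 * ((c - V₀ 0 i) / lam0 + 1) = (c - V₀ 0 i) + lam0 := by
      field_simp
    rw [hlt] at h
    linarith
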